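/- (Algebraic inequality for truncated powers.) Let p and m be real numbers with 1 < p < 2, m > 0 and pm > 1. Then there exists a constant C = C(p,m) > 0 such that for all real numbers a, b ≥ 0 one has (a − b)(a^{pm−1} − b^{pm−1}) ≤ C |a^m − b^m|^p. -/

import Mathlib

open Real

/-- On `[0,1]`: `1 - t^s ≤ max s 1 * (1 - t)` for `s > 0`. -/
lemma key_upper {s t : ℝ} (hs : 0 < s) (ht : 0 ≤ t) (ht1 : t ≤ 1) :
    1 - t ^ s ≤ max s 1 * (1 - t) := by
  rcases le_or_gt s 1 with h | h
  · rw [max_eq_right h]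
    rcases eq_or_lt_of_le ht with rfl | ht'
    · simp [Real.zero_rpow hs.ne']
    · have : t ^ (1:ℝ) ≤ t ^ s :=
        Real.rpow_le_rpow_of_exponent_ge ht' ht1 h
      rw [Real.rpow_one] at this
      linarith
  · rw [max_eq_left h.le]
    have := one_add_mul_self_le_rpow_one_add (s := t - 1) (by linarith) h.le
    have h2 : (1 + (t-1)) = t := by ring
    rw [h2] at this
    nlinarith

/-- On `[0,1]`: `min s 1 * (1 - t) ≤ 1 - t^s` for `s > 0`. -/
lemma key_lower {s t : ℝ} (hs : 0 < s) (ht : 0 ≤ t) (ht1 : t ≤ 1) :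
    min s 1 * (1 - t) ≤ 1 - t ^ s := by
  rcases le_or_gt s 1 with h | h
  · rw [min_eq_left h]
    have := rpow_one_add_le_one_add_mul_self (s := t - 1) (by linarith) hs.le h
    have h2 : (1 + (t-1)) = t := by ring
    rw [h2] at this
    nlinarith
  · rw [min_eq_right h.le]
    rcases eq_or_lt_of_le ht with rfl | ht'
    · simp [Real.zero_rpow hs.ne']
    · have : t ^ s ≤ t ^ (1:ℝ) :=
        Real.rpow_le_rpow_of_exponent_ge ht' ht1 h.le
      rw [Real.rpow_one] at this
      linarith

/-- For `0 ≤ b ≤ a`, `0 < a`, `s > 0`: `a^s - b^s ≤ max s 1 * (a^(s-1) * (a-b))`. -/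
lemma pow_diff_upper {s a b : ℝ} (hs : 0 < s) (hb : 0 ≤ b) (hba : b ≤ a) (ha : 0 < a) :
    a ^ s - b ^ s ≤ max s 1 * (a ^ (s - 1) * (a - b)) := by
  have ht : 0 ≤ b / a := div_nonneg hb ha.le
  have ht1 : b / a ≤ 1 := (div_le_one ha).mpr hba
  have key := key_upper hs ht ht1
  have hbs : b ^ s = (b / a) ^ s * a ^ s := by
    rw [Real.div_rpow hb ha.le]
    field_simp [(Real.rpow_pos_of_pos ha s).ne']
  have hsplit : a ^ (s - 1) * (a - b) = a ^ s * (1 - b / a) := by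
    have : a ^ s = a ^ (s - 1) * a := by
      rw [← Real.rpow_add_one ha.ne' (s-1)]; ring_nf
    rw [this]
    field_simp
  rw [hbs, hsplit]
  have hap : (0:ℝ) ≤ a ^ s := (Real.rpow_pos_of_pos ha s).le
  calc a ^ s - (b/a) ^ s * a ^ s = a ^ s * (1 - (b/a) ^ s) := by ring
    _ ≤ a ^ s * (max s 1 * (1 - b/a)) := by
        apply mul_le_mul_of_nonneg_left key hap
    _ = max s 1 * (a ^ s * (1 - b/a)) := by ring

/-- For `0 ≤ b ≤ a`, `0 < a`, `s > 0`: `min s 1 * (a^(s-1) * (a-b)) ≤ a^s - b^s`. -/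
lemma pow_diff_lower {s a b : ℝ} (hs : 0 < s) (hb : 0 ≤ b) (hba : b ≤ a) (ha : 0 < a) :
    min s 1 * (a ^ (s - 1) * (a - b)) ≤ a ^ s - b ^ s := by
  have ht : 0 ≤ b / a := div_nonneg hb ha.le
  have ht1 : b / a ≤ 1 := (div_le_one ha).mpr hba
  have key := key_lower hs ht ht1
  have hbs : b ^ s = (b / a) ^ s * a ^ s := by
    rw [Real.div_rpow hb ha.le]
    field_simp [(Real.rpow_pos_of_pos ha s).ne']
  have hsplit : a ^ (s - 1) * (a - b) = a ^ s * (1 - b / a) := by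
    have : a ^ s = a ^ (s - 1) * a := by
      rw [← Real.rpow_add_one ha.ne' (s-1)]; ring_nf
    rw [this]
    field_simp
  rw [hbs, hsplit]
  have hap : (0:ℝ) ≤ a ^ s := (Real.rpow_pos_of_pos ha s).le
  calc min s 1 * (a ^ s * (1 - b/a)) = a ^ s * (min s 1 * (1 - b/a)) := by ring
    _ ≤ a ^ s * (1 - (b/a) ^ s) := mul_le_mul_of_nonneg_left key hap
    _ = a ^ s - (b/a) ^ s * a ^ s := by ring

/-- Main inequality for ordered arguments. -/
lemma main_aux (p m : ℝ) (hp1 : 1 < p) (hp2 : p < 2)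
    (hm : 0 < m) (hpm : 1 < p * m) (a b : ℝ) (hb : 0 ≤ b) (hba : b ≤ a) :
    (a - b) * (a ^ (p * m - 1) - b ^ (p * m - 1)) ≤
      (max (p*m-1) 1 / (min m 1) ^ p) * |a ^ m - b ^ m| ^ p := by
  set q := p * m with hq
  have hC0 : (0:ℝ) < min m 1 := lt_min hm one_pos
  have hCp : (0:ℝ) < (min m 1) ^ p := Real.rpow_pos_of_pos hC0 p
  have hM : (0:ℝ) < max (q-1) 1 := lt_of_lt_of_le one_pos (le_max_right _ _)
  rcases eq_or_lt_of_le (hb.trans hba) with h0 | ha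
  · -- a = 0, hence b = 0
    have ha0 : a = 0 := h0.symm
    have hb0 : b = 0 := le_antisymm (ha0 ▸ hba) hb
    subst ha0; subst hb0
    simp [Real.zero_rpow (by positivity : p ≠ 0)]
  -- a > 0
  have hdiff : 0 ≤ a - b := by linarith
  -- upper bound on LHS
  have hU := pow_diff_upper (s := q - 1) (by linarith) hb hba ha
  -- lower bound for a^m - b^m
  have hL := pow_diff_lower (s := m) hm hb hba ha
  have hmb : b ^ m ≤ a ^ m := Real.rpow_le_rpow hb hba hm.le
  have habs : |a ^ m - b ^ m| = a ^ m - b ^ m := abs_of_nonneg (by linarith)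
  rw [habs]
  have hLnn : 0 ≤ min m 1 * (a ^ (m - 1) * (a - b)) := by
    have := Real.rpow_pos_of_pos ha (m-1)
    positivity
  -- raise to power p
  have hRp : (min m 1 * (a ^ (m - 1) * (a - b))) ^ p ≤ (a ^ m - b ^ m) ^ p :=
    Real.rpow_le_rpow hLnn hL (by linarith)
  have hexpand : (min m 1 * (a ^ (m - 1) * (a - b))) ^ p
      = (min m 1) ^ p * (a ^ ((m-1)*p) * (a - b) ^ p) := by
    rw [Real.mul_rpow hC0.le (by positivity),
      Real.mul_rpow (Real.rpow_pos_of_pos ha (m-1)).le hdiff, ← Real.rpow_mul ha.le]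
  rw [hexpand] at hRp
  -- key chain
  have hcore : a ^ (q - 2) * (a - b) ^ (2:ℝ) ≤ a ^ ((m-1)*p) * (a - b) ^ p := by
    rcases eq_or_lt_of_le hdiff with hd0 | hd
    · rw [← hd0]
      rw [Real.zero_rpow (by norm_num : (2:ℝ) ≠ 0), Real.zero_rpow (by positivity : p ≠ 0)]
      simp
    · have h1 : a ^ (q - 2) = a ^ ((m-1)*p) * a ^ (p - 2) := by
        rw [← Real.rpow_add ha, hq]; ring_nf
      have h2 : (a - b) ^ (2:ℝ) = (a - b) ^ p * (a - b) ^ (2 - p) := by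
        rw [← Real.rpow_add hd]; ring_nf
      rw [h1, h2]
      have h3 : a ^ (p-2) * (a-b) ^ (2-p) ≤ 1 := by
        have h4 : (a - b) ^ (2-p) ≤ a ^ (2-p) :=
          Real.rpow_le_rpow hdiff (by linarith) (by linarith)
        have h5 : a ^ (p-2) * a ^ (2-p) = 1 := by
          rw [← Real.rpow_add ha]; norm_num
        calc a ^ (p-2) * (a-b) ^ (2-p) ≤ a ^ (p-2) * a ^ (2-p) :=
              mul_le_mul_of_nonneg_left h4 (Real.rpow_pos_of_pos ha _).le
          _ = 1 := h5
      calc a ^ ((m-1)*p) * a ^ (p-2) * ((a-b) ^ p * (a-b) ^ (2-p))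
          = (a ^ ((m-1)*p) * (a-b) ^ p) * (a ^ (p-2) * (a-b) ^ (2-p)) := by ring
        _ ≤ (a ^ ((m-1)*p) * (a-b) ^ p) * 1 := by
            apply mul_le_mul_of_nonneg_left h3
            have := Real.rpow_pos_of_pos ha ((m-1)*p)
            have := Real.rpow_pos_of_pos hd p
            positivity
        _ = a ^ ((m-1)*p) * (a-b) ^ p := by ring
  have hsq : (a - b) ^ (2:ℝ) = (a-b) * (a-b) := by
    rw [Real.rpow_two]; ring
  calc (a - b) * (a ^ (q - 1) - b ^ (q - 1))
      ≤ (a - b) * (max (q-1) 1 * (a ^ (q - 1 - 1) * (a - b))) :=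
        mul_le_mul_of_nonneg_left hU hdiff
    _ = max (q-1) 1 * (a ^ (q-2) * (a-b) ^ (2:ℝ)) := by
        rw [hsq]; ring_nf
    _ ≤ max (q-1) 1 * (a ^ ((m-1)*p) * (a-b) ^ p) :=
        mul_le_mul_of_nonneg_left hcore hM.le
    _ ≤ (max (q-1) 1 / (min m 1) ^ p) * ((a ^ m - b ^ m) ^ p) := by
        rw [div_mul_eq_mul_div, le_div_iff₀ hCp]
        calc max (q-1) 1 * (a ^ ((m-1)*p) * (a-b) ^ p) * (min m 1) ^ p
            = max (q-1) 1 * ((min m 1) ^ p * (a ^ ((m-1)*p) * (a-b) ^ p)) := by ring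
          _ ≤ max (q-1) 1 * ((a ^ m - b ^ m) ^ p) :=
              mul_le_mul_of_nonneg_left hRp hM.le
          _ = max (q-1) 1 * (a ^ m - b ^ m) ^ p := rfl

/-- Algebraic inequality for truncated powers: for `1 < p < 2`, `m > 0`, `pm > 1`,
there is `C = C(p,m) > 0` with `(a-b)(a^{pm-1} - b^{pm-1}) ≤ C |a^m - b^m|^p`
for all `a, b ≥ 0`. -/
theorem algebraic_power_inequality (p m : ℝ) (hp1 : 1 < p) (hp2 : p < 2)
    (hm : 0 < m) (hpm : 1 < p * m) :
    ∃ C : ℝ, 0 < C ∧ ∀ a b : ℝ, 0 ≤ a → 0 ≤ b →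
      (a - b) * (a ^ (p * m - 1) - b ^ (p * m - 1)) ≤ C * |a ^ m - b ^ m| ^ p := by
  refine ⟨max (p*m-1) 1 / (min m 1) ^ p, ?_, ?_⟩
  · have hC0 : (0:ℝ) < min m 1 := lt_min hm one_pos
    have := Real.rpow_pos_of_pos hC0 p
    have : (0:ℝ) < max (p*m-1) 1 := lt_of_lt_of_le one_pos (le_max_right _ _)
    positivity
  · intro a b ha hb
    rcases le_total b a with h | h
    · exact main_aux p m hp1 hp2 hm hpm a b hb h
    · have := main_aux p m hp1 hp2 hm hpm b a ha h
      have e1 : (a - b) * (a ^ (p * m - 1) - b ^ (p * m - 1))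
          = (b - a) * (b ^ (p * m - 1) - a ^ (p * m - 1)) := by ring
      have e2 : |a ^ m - b ^ m| = |b ^ m - a ^ m| := abs_sub_comm _ _
      rw [e1, e2]
      exact this
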